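/- Let n be a positive integer and P ≥ 1 a real number. If F is a finite set of triples (i1, i2, i3) with 1 ≤ i1, i2, i3 ≤ n and |F| ≥ n³/P, then |φ_A(F)| + |φ_B(F)| + |φ_C(F)| ≥ 3·n²/P^{2/3}. -/

import Mathlib

open Finset

/-- Discrete Loomis–Whitney inequality for triples. -/
lemma loomis_whitney (F : Finset (ℕ × ℕ × ℕ)) :
    F.card ^ 2 ≤ (F.image fun t => (t.1, t.2.1)).card *
      (F.image fun t => (t.2.1, t.2.2)).card *
      (F.image fun t => (t.1, t.2.2)).card := by
  classical
  set A := F.image fun t => (t.1, t.2.1) with hA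
  set B := F.image fun t => (t.2.1, t.2.2) with hB
  set C := F.image fun t => (t.1, t.2.2) with hC
  set c : ℕ × ℕ → ℕ := fun p => (F.filter fun t => (t.1, t.2.2) = p).card with hc
  have h1 : F.card = ∑ p ∈ C, c p :=
    card_eq_sum_card_fiberwise (fun t ht => mem_image_of_mem _ ht)
  -- Cauchy–Schwarz in ℕ
  have h2 : (∑ p ∈ C, c p) ^ 2 ≤ C.card * ∑ p ∈ C, (c p) ^ 2 := by
    calc (∑ p ∈ C, c p) ^ 2 = (∑ p ∈ C, 1 * c p) ^ 2 := by simp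
      _ ≤ (∑ p ∈ C, 1 ^ 2) * ∑ p ∈ C, (c p) ^ 2 := sum_mul_sq_le_sq_mul_sq C _ _
      _ = C.card * ∑ p ∈ C, (c p) ^ 2 := by simp
  -- the paired set
  set S : Finset ((ℕ × ℕ × ℕ) × (ℕ × ℕ × ℕ)) :=
    (F ×ˢ F).filter fun tu => tu.1.1 = tu.2.1 ∧ tu.1.2.2 = tu.2.2.2 with hS
  have h3 : ∑ p ∈ C, (c p) ^ 2 = S.card := by
    rw [card_eq_sum_card_fiberwise
      (f := fun tu => (tu.1.1, tu.1.2.2)) (t := C) ?_]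
    · refine sum_congr rfl fun p hp => ?_
      have : S.filter (fun tu => (tu.1.1, tu.1.2.2) = p)
          = (F.filter fun t => (t.1, t.2.2) = p) ×ˢ (F.filter fun t => (t.1, t.2.2) = p) := by
        ext ⟨⟨a, b, cc⟩, ⟨d, e, f⟩⟩
        simp only [hS, mem_filter, mem_product, Prod.ext_iff]
        constructor
        · rintro ⟨⟨⟨h1f, h2f⟩, h4, h5⟩, h6, h7⟩
          refine ⟨⟨h1f, h6, h7⟩, h2f, ?_, ?_⟩ <;> simp_all
        · rintro ⟨⟨h1f, h6, h7⟩, h2f, h8, h9⟩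
          refine ⟨⟨⟨h1f, h2f⟩, ?_, ?_⟩, h6, h7⟩ <;> simp_all
      rw [this, card_product, sq, hc]
    · rintro ⟨⟨a, b, cc⟩, ⟨d, e, f⟩⟩ htu
      simp only [hS, mem_coe, mem_filter, mem_product] at htu
      exact mem_image_of_mem _ htu.1.1
  have h4 : S.card ≤ A.card * B.card := by
    rw [← card_product]
    apply card_le_card_of_injOn (fun tu => ((tu.1.1, tu.1.2.1), (tu.2.2.1, tu.2.2.2)))
    · intro tu htu
      obtain ⟨⟨a, b, cc⟩, ⟨d, e, f⟩⟩ := tu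
      simp only [hS, mem_coe, mem_filter, mem_product] at htu
      exact mem_product.2 ⟨mem_image_of_mem _ htu.1.1, mem_image_of_mem _ htu.1.2⟩
    · intro tu h tu' h' heq
      obtain ⟨⟨a, b, cc⟩, ⟨d, e, f⟩⟩ := tu
      obtain ⟨⟨a', b', cc'⟩, ⟨d', e', f'⟩⟩ := tu'
      simp only [hS, mem_coe, mem_filter, mem_product] at h h'
      simp only [Prod.mk.injEq] at heq ⊢
      obtain ⟨-, h1, h2⟩ := h
      obtain ⟨-, h1', h2'⟩ := h'
      refine ⟨⟨?_, ?_, ?_⟩, ?_, ?_, ?_⟩ <;> omega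
  calc F.card ^ 2 = (∑ p ∈ C, c p) ^ 2 := by rw [h1]
    _ ≤ C.card * ∑ p ∈ C, (c p) ^ 2 := h2
    _ ≤ C.card * (A.card * B.card) := Nat.mul_le_mul_left _ (h3 ▸ h4)
    _ = A.card * B.card * C.card := by ring

/-- Square-matrix data-access lower bound: if a processor is assigned a set
`F` of at least `n³/P` lattice points of the `n × n × n` iteration space, then
the total size of the three projections of `F` is at least `3n²/P^{2/3}`. -/
theorem stmt_10 (n : ℕ) (hn : 0 < n) (P : ℝ) (hP : 1 ≤ P)
    (F : Finset (ℕ × ℕ × ℕ))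
    (hF : ∀ t ∈ F, (1 ≤ t.1 ∧ t.1 ≤ n) ∧ (1 ≤ t.2.1 ∧ t.2.1 ≤ n) ∧
      (1 ≤ t.2.2 ∧ t.2.2 ≤ n))
    (hcard : (n : ℝ) ^ 3 / P ≤ F.card) :
    3 * (n : ℝ) ^ 2 / P ^ ((2 : ℝ) / 3) ≤
      ((F.image fun t => (t.1, t.2.1)).card : ℝ) +
        (F.image fun t => (t.2.1, t.2.2)).card +
        (F.image fun t => (t.1, t.2.2)).card := by
  have hP0 : (0 : ℝ) < P := lt_of_lt_of_le one_pos hP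
  set a : ℝ := ((F.image fun t => (t.1, t.2.1)).card : ℝ)
  set b : ℝ := ((F.image fun t => (t.2.1, t.2.2)).card : ℝ)
  set c : ℝ := ((F.image fun t => (t.1, t.2.2)).card : ℝ)
  have ha : 0 ≤ a := Nat.cast_nonneg _
  have hb : 0 ≤ b := Nat.cast_nonneg _
  have hc : 0 ≤ c := Nat.cast_nonneg _
  have hlw : ((F.card : ℝ)) ^ 2 ≤ a * b * c := by
    have := (Nat.cast_le (α := ℝ)).2 (loomis_whitney F)
    push_cast at this
    simpa [a, b, c] using this
  have hq : ((n : ℝ) ^ 3 / P) ^ 2 ≤ a * b * c := by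
    refine le_trans ?_ hlw
    have h0 : (0 : ℝ) ≤ (n : ℝ) ^ 3 / P := by positivity
    exact pow_le_pow_left₀ h0 hcard 2
  have hkey : (n : ℝ) ^ 2 / P ^ ((2:ℝ)/3) ≤ (a * b * c) ^ ((1:ℝ)/3) := by
    have h0 : (0 : ℝ) ≤ ((n : ℝ) ^ 3 / P) ^ 2 := by positivity
    refine le_trans (le_of_eq ?_)
      (Real.rpow_le_rpow h0 hq (by norm_num : (0:ℝ) ≤ (1:ℝ)/3))
    rw [← Real.rpow_natCast ((n:ℝ)^3/P) 2, ← Real.rpow_mul (by positivity)]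
    norm_num
    rw [Real.div_rpow (by positivity) hP0.le, ← Real.rpow_natCast (n:ℝ) 3,
      ← Real.rpow_mul (Nat.cast_nonneg n)]
    norm_num
  have hml : (a * b * c) ^ ((1:ℝ)/3) = a ^ ((1:ℝ)/3) * b ^ ((1:ℝ)/3) * c ^ ((1:ℝ)/3) := by
    rw [Real.mul_rpow (mul_nonneg ha hb) hc, Real.mul_rpow ha hb]
  have hgm := Real.geom_mean_le_arith_mean3_weighted (by norm_num) (by norm_num) (by norm_num)
    ha hb hc (by norm_num : (1:ℝ)/3 + 1/3 + 1/3 = 1)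
  rw [mul_div_assoc]
  rw [hml] at hkey
  linarith
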